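/- Let X be a Polish Abelian group and A ⊆ X. Then A is Haar-thin if and only if A − A = {a − b : a, b ∈ A} is not a neighborhood of zero in X. -/

import Mathlib

open Set Filter Topology Pointwise MeasureTheory

/-- A Borel set `A` in a topological Abelian group is *Haar-meager* if there is a continuous
map `f` from the Cantor cube `ℕ → Bool` such that `f ⁻¹' (A + x)` is meager for every `x`. -/
def HaarMeager {X : Type*} [TopologicalSpace X] [AddCommGroup X] (A : Set X) : Prop :=
  ∃ f : (ℕ → Bool) → X, Continuous f ∧ ∀ x : X, IsMeagre (f ⁻¹' ((fun a => a + x) '' A))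

/-- A set `A` is *Haar-null* if there is a Borel probability measure `μ` on `X` such that
`μ (A + x) = 0` for every `x ∈ X`. -/
def HaarNull {X : Type*} [MeasurableSpace X] [AddCommGroup X] (A : Set X) : Prop :=
  ∃ μ : Measure X, IsProbabilityMeasure μ ∧ ∀ x : X, μ ((fun a => a + x) '' A) = 0

/-- A subset `T` of the Cantor cube is *thin* if for every coordinate `n`, any two elements
of `T` agreeing at all coordinates except possibly `n` are equal. -/
def IsThinSet (T : Set (ℕ → Bool)) : Prop :=
  ∀ n : ℕ, ∀ s ∈ T, ∀ t ∈ T, (∀ m : ℕ, m ≠ n → s m = t m) → s = t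

/-- A set `A` is *Haar-thin* if there is a continuous map `f` from the Cantor cube such that
`f ⁻¹' (A + x)` is thin for every `x`. -/
def HaarThin {X : Type*} [TopologicalSpace X] [AddCommGroup X] (A : Set X) : Prop :=
  ∃ f : (ℕ → Bool) → X, Continuous f ∧ ∀ x : X, IsThinSet (f ⁻¹' ((fun a => a + x) '' A))

/-- A set `A` is *null-finite* if there is a null sequence `(x n)` such that
`{n | x n + y ∈ A}` is finite for every `y`. -/
def NullFinite {X : Type*} [TopologicalSpace X] [AddCommGroup X] (A : Set X) : Prop :=
  ∃ x : ℕ → X, Tendsto x atTop (nhds 0) ∧ ∀ y : X, {n : ℕ | x n + y ∈ A}.Finite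

/-- A set `A` is *Haar-open* if for every compact `K` and `p ∈ K` there is `x` such that
`K ∩ (A + x)` is a neighborhood of `p` in the subspace `K`. -/
def HaarOpen {X : Type*} [TopologicalSpace X] [AddCommGroup X] (A : Set X) : Prop :=
  ∀ K : Set X, IsCompact K → ∀ p ∈ K, ∃ x : X,
    K ∩ ((fun a => a + x) '' A) ∈ nhdsWithin p K

/-- A subset `A` of a Polish Abelian group is Haar-thin if and only if `A - A` is not a
neighborhood of zero. -/
theorem statement16 {X : Type*} [TopologicalSpace X] [AddCommGroup X]
    [IsTopologicalAddGroup X] [PolishSpace X] (A : Set X) :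
    HaarThin A ↔ ¬ (A - A ∈ nhds (0 : X)) := by
  constructor
  · rintro ⟨f, hf, hthin⟩ hA
    set s : ℕ → Bool := fun _ => false with hs
    have hconv : Tendsto (fun n => Function.update s n true) atTop (𝓝 s) := by
      rw [tendsto_pi_nhds]
      intro m
      have hEq : (fun _ : ℕ => s m) =ᶠ[atTop] fun n => Function.update s n true m := by
        filter_upwards [eventually_gt_atTop m] with n hn
        rw [Function.update_of_ne (by omega : m ≠ n)]
      exact tendsto_const_nhds.congr' hEq
    have h2 : Tendsto (fun n => f (Function.update s n true) - f s) atTop (𝓝 0) := by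
      have := ((hf.tendsto s).comp hconv).sub (tendsto_const_nhds (x := f s))
      rwa [sub_self] at this
    obtain ⟨n, hn⟩ := (h2.eventually_mem hA).exists
    rw [Set.mem_sub] at hn
    obtain ⟨a, ha, b, hb, hab⟩ := hn
    set x := f s - b with hx
    have hsx : s ∈ f ⁻¹' ((fun a => a + x) '' A) :=
      ⟨b, hb, by show b + x = f s; rw [hx]; abel⟩
    have hux : Function.update s n true ∈ f ⁻¹' ((fun a => a + x) '' A) := by
      refine ⟨a, ha, ?_⟩
      show a + x = f (Function.update s n true)
      have h5 : a + f s = f (Function.update s n true) + b :=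
        sub_eq_sub_iff_add_eq_add.mp hab
      rw [hx]
      calc a + (f s - b) = a + f s - b := by abel
        _ = f (Function.update s n true) + b - b := by rw [h5]
        _ = f (Function.update s n true) := by abel
    have heq := hthin x n _ hux _ hsx
      (fun m hm => Function.update_of_ne hm _ _)
    have := congrFun heq n
    simp [Function.update_self] at this
  · intro hA
    classical
    letI := TopologicalSpace.upgradeIsCompletelyMetrizable X
    have symm_sub : ∀ {u : X}, u ∈ A - A → -u ∈ A - A := by
      intro u hu
      rw [Set.mem_sub] at hu ⊢
      obtain ⟨a, ha, b, hb, rfl⟩ := hu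
      exact ⟨b, hb, a, ha, by abel⟩
    have key : ∀ (w : ℕ → X) (k : ℕ), ∃ z : X, z ∉ A - A ∧
        ∀ s : ℕ → Bool, dist ((∑ n ∈ Finset.range k, if s n then w n else 0) + z)
          (∑ n ∈ Finset.range k, if s n then w n else 0) < 2 / 2 / 2 ^ k := by
      intro w k
      set c : ℝ := 2 / 2 / 2 ^ k with hc
      have hcpos : 0 < c := by positivity
      set F : Finset X := (Finset.range k).powerset.image (fun T => ∑ n ∈ T, w n) with hF
      have hnhds : {z : X | ∀ v ∈ F, dist (v + z) v < c} ∈ 𝓝 (0 : X) := by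
        have heq : {z : X | ∀ v ∈ F, dist (v + z) v < c}
            = ⋂ v ∈ F, {z : X | dist (v + z) v < c} := by
          ext z; simp
        rw [heq]
        refine (biInter_finset_mem F).2 fun v _ => ?_
        have hcont : Continuous fun z : X => dist (v + z) v :=
          (continuous_const.add continuous_id).dist continuous_const
        have hopen : IsOpen {z : X | dist (v + z) v < c} :=
          isOpen_Iio.preimage hcont
        exact hopen.mem_nhds (by simp [hcpos])
      obtain ⟨z, hz1, hz2⟩ : ∃ z ∈ {z : X | ∀ v ∈ F, dist (v + z) v < c}, z ∉ A - A := by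
        by_contra h
        push_neg at h
        exact hA (mem_of_superset hnhds h)
      refine ⟨z, hz2, fun s => ?_⟩
      refine hz1 _ ?_
      rw [hF]
      refine Finset.mem_image.2 ⟨(Finset.range k).filter (fun n => s n = true),
        Finset.mem_powerset.2 (Finset.filter_subset _ _), ?_⟩
      rw [Finset.sum_filter]
    choose pick hpickA hpickD using key
    let L : ℕ → List X := fun k =>
      Nat.rec ([] : List X) (fun _ l => l ++ [pick (fun n => l.getD n 0) l.length]) k
    let z : ℕ → X := fun k => pick (fun n => (L k).getD n 0) k
    have hLlen : ∀ k, (L k).length = k := by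
      intro k
      induction k with
      | zero => rfl
      | succ k ih =>
        show (L k ++ [_]).length = k + 1
        rw [List.length_append, ih]
        rfl
    have hLsucc : ∀ k, L (k + 1) = L k ++ [z k] := by
      intro k
      show L k ++ [pick (fun n => (L k).getD n 0) (L k).length] = L k ++ [z k]
      rw [hLlen k]
    have hgetD : ∀ k n, n < k → (L k).getD n 0 = z n := by
      intro k
      induction k with
      | zero => omega
      | succ k ih =>
        intro n hn
        rw [hLsucc k]
        rcases Nat.lt_or_ge n k with h | h
        · rw [List.getD_append _ _ _ _ (by rw [hLlen]; exact h)]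
          exact ih n h
        · have hnk : n = k := by omega
          subst hnk
          rw [List.getD_append_right _ _ _ _ (by rw [hLlen])]
          rw [hLlen]
          simp
    set g : ℕ → (ℕ → Bool) → X := fun k s => ∑ n ∈ Finset.range k, if s n then z n else 0
      with hg
    have hdist : ∀ (s : ℕ → Bool) (k : ℕ), dist (g k s) (g (k + 1) s) ≤ 2 / 2 / 2 ^ k := by
      intro s k
      have h1 : g (k + 1) s = g k s + (if s k then z k else 0) := Finset.sum_range_succ _ _
      by_cases hsk : s k
      · rw [h1, if_pos hsk, dist_comm]
        have hsum : (∑ n ∈ Finset.range k, if s n then (L k).getD n 0 else 0) = g k s :=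
          Finset.sum_congr rfl fun n hn => by
            rw [hgetD k n (Finset.mem_range.1 hn)]
        have := hpickD (fun n => (L k).getD n 0) k s
        rw [hsum] at this
        exact this.le
      · rw [h1, if_neg hsk, add_zero, dist_self]
        positivity
    have hcauchy : ∀ s, CauchySeq fun k => g k s := fun s =>
      cauchySeq_of_le_geometric_two (hdist s)
    choose F hF using fun s => cauchySeq_tendsto_of_complete (hcauchy s)
    have hgcont : ∀ k, Continuous (g k) := by
      intro k
      refine continuous_finset_sum _ fun n _ => ?_
      exact (continuous_of_discreteTopology
        (f := fun b : Bool => if b then z n else 0)).comp (continuous_apply n)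
    have hb : ∀ k s, dist (g k s) (F s) ≤ 2 / 2 ^ k := fun k s =>
      dist_le_of_le_geometric_two_of_tendsto (hdist s) (hF s) k
    have hunif : TendstoUniformly g F atTop := by
      rw [Metric.tendstoUniformly_iff]
      intro ε hε
      have htend : Tendsto (fun k : ℕ => (2 : ℝ) / 2 ^ k) atTop (𝓝 0) :=
        tendsto_const_nhds.div_atTop (tendsto_pow_atTop_atTop_of_one_lt one_lt_two)
      filter_upwards [htend.eventually (gt_mem_nhds hε)] with k hk s
      calc dist (F s) (g k s) = dist (g k s) (F s) := dist_comm _ _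
        _ ≤ 2 / 2 ^ k := hb k s
        _ < ε := hk
    have hFcont : Continuous F := hunif.continuous (Eventually.of_forall hgcont).frequently
    have hdiff : ∀ (s t : ℕ → Bool) (n : ℕ), (∀ m : ℕ, m ≠ n → s m = t m) →
        s n = true → t n = false → F s = F t + z n := by
      intro s t n hst hsn htn
      have hk : ∀ k : ℕ, g (k + (n + 1)) s = g (k + (n + 1)) t + z n := by
        intro k
        have hsub : g (k + (n + 1)) s - g (k + (n + 1)) t = z n := by
          rw [hg]
          rw [← Finset.sum_sub_distrib]
          have : ∀ m ∈ Finset.range (k + (n + 1)),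
              ((if s m then z m else 0) - (if t m then z m else 0))
                = if m = n then z n else 0 := by
            intro m _
            by_cases hm : m = n
            · subst hm
              rw [hsn, htn]
              simp
            · rw [hst m hm]
              simp [hm]
          rw [Finset.sum_congr rfl this, Finset.sum_ite_eq' (Finset.range (k + (n + 1)))]
          rw [if_pos (Finset.mem_range.2 (by omega))]
        linear_combination (norm := abel) hsub
      have h1 : Tendsto (fun k => g (k + (n + 1)) s) atTop (𝓝 (F s)) :=
        (hF s).comp (tendsto_add_atTop_nat (n + 1))
      have h2 : Tendsto (fun k => g (k + (n + 1)) t + z n) atTop (𝓝 (F t + z n)) :=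
        ((hF t).comp (tendsto_add_atTop_nat (n + 1))).add_const _
      exact tendsto_nhds_unique h1 (h2.congr fun k => (hk k).symm)
    refine ⟨F, hFcont, fun x => ?_⟩
    intro n s hs t ht hst
    by_cases h : s n = t n
    · funext m
      by_cases hm : m = n
      · subst hm; exact h
      · exact hst m hm
    · exfalso
      obtain ⟨a, ha, hax⟩ := hs
      obtain ⟨b, hb, hbx⟩ := ht
      simp only at hax hbx
      have hmem : ∀ u v : X, u ∈ A → v ∈ A → False → False := fun _ _ _ _ h => h
      have hcase : (s n = true ∧ t n = false) ∨ (s n = false ∧ t n = true) := by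
        revert h; cases s n <;> cases t n <;> simp
      rcases hcase with ⟨h1, h2⟩ | ⟨h1, h2⟩
      · have hd := hdiff s t n hst h1 h2
        refine hpickA (fun m => (L n).getD m 0) n ?_
        show z n ∈ A - A
        rw [Set.mem_sub]
        refine ⟨a, ha, b, hb, ?_⟩
        have : F s - F t = z n := by rw [hd]; abel
        rw [← hax, ← hbx] at this
        rw [← this]; abel
      · have hd := hdiff t s n (fun m hm => (hst m hm).symm) h2 h1
        refine hpickA (fun m => (L n).getD m 0) n ?_
        show z n ∈ A - A
        rw [Set.mem_sub]
        refine ⟨b, hb, a, ha, ?_⟩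
        have : F t - F s = z n := by rw [hd]; abel
        rw [← hax, ← hbx] at this
        rw [← this]; abel
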